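/- Let F be a factorial set and x ∈ F. Let Γ_F(x) = { w ∈ A* : xw ∈ F and xw ∈ A*x } and let R_F(x) be the set of nonempty elements of Γ_F(x) with no proper nonempty prefix in Γ_F(x). Then Γ_F(x) = R_F(x)* ∩ x⁻¹F, where x⁻¹F = { w : xw ∈ F }. -/

import Mathlib

private lemma stmt_10_helper {A : Type*} (F : Set (List A))
    (hfac : ∀ w ∈ F, ∀ u : List A, u <:+: w → u ∈ F)
    (x : List A) :
    ∀ n (w : List A), w.length ≤ n → x ++ w ∈ F → (∃ s, x ++ w = s ++ x) →
      ∃ l : List (List A),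
        (∀ y ∈ l, y ≠ [] ∧ (x ++ y ∈ F ∧ ∃ s : List A, x ++ y = s ++ x) ∧
          ∀ p : List A, p <+: y → p ≠ [] → p ≠ y →
            ¬(x ++ p ∈ F ∧ ∃ s : List A, x ++ p = s ++ x)) ∧
        l.flatten = w := by
  intro n
  induction n with
  | zero =>
    intro w hw _ _
    have : w = [] := List.length_eq_zero_iff.mp (Nat.le_zero.mp hw)
    subst this
    exact ⟨[], by simp, rfl⟩
  | succ n ih =>
    intro w hw hF hs
    by_cases hwe : w = []
    · subst hwe; exact ⟨[], by simp, rfl⟩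
    · classical
      have hex : ∃ m, 0 < m ∧ m ≤ w.length ∧ x ++ w.take m ∈ F ∧
          ∃ s, x ++ w.take m = s ++ x := by
        refine ⟨w.length, List.length_pos_iff.mpr hwe, le_refl _, ?_⟩
        simpa [List.take_length] using And.intro hF hs
      set m := Nat.find hex with hm
      obtain ⟨hm0, hmle, hpF, s, hps⟩ := Nat.find_spec hex
      set p := w.take m with hp
      set w' := w.drop m with hw'
      have hplen : p.length = m := by
        simp [hp, List.length_take, Nat.min_eq_left hmle]; exact hmle
      have hpw : p ++ w' = w := List.take_append_drop m w
      -- p is a return word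
      have hpret : p ≠ [] ∧ (x ++ p ∈ F ∧ ∃ s : List A, x ++ p = s ++ x) ∧
          ∀ q : List A, q <+: p → q ≠ [] → q ≠ p →
            ¬(x ++ q ∈ F ∧ ∃ s : List A, x ++ q = s ++ x) := by
        refine ⟨?_, ⟨hpF, s, hps⟩, ?_⟩
        · intro h
          rw [h] at hplen
          simp at hplen
          omega
        · intro q hq hq0 hqp hmem
          have hql : q.length < m := by
            have := List.IsPrefix.length_le hq
            rw [hplen] at this
            rcases lt_or_eq_of_le this with h | h
            · exact h
            · exfalso
              exact hqp (List.IsPrefix.eq_of_length hq (by rw [hplen, h]))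
          have hqw : q <+: w := hq.trans (List.take_prefix m w)
          have hqtake : w.take q.length = q := (List.prefix_iff_eq_take.mp hqw).symm
          have : 0 < q.length ∧ q.length ≤ w.length ∧ x ++ w.take q.length ∈ F ∧
              ∃ s, x ++ w.take q.length = s ++ x := by
            rw [hqtake]
            exact ⟨List.length_pos_iff.mpr hq0, hqw.length_le, hmem.1, hmem.2⟩
          exact Nat.find_min hex hql this
      -- w' is in Γ
      have hxw : x ++ w = s ++ (x ++ w') := by
        rw [← hpw, ← List.append_assoc, hps, List.append_assoc]
      have hw'suf : (x ++ w') <:+ (x ++ w) := ⟨s, hxw.symm⟩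
      have hw'F : x ++ w' ∈ F := hfac _ hF _ hw'suf.isInfix
      have hw'x : ∃ u, x ++ w' = u ++ x := by
        obtain ⟨t, ht⟩ := hs
        have hxsuf : x <:+ (x ++ w) := ⟨t, by rw [ht]⟩
        rcases List.suffix_or_suffix_of_suffix hxsuf hw'suf with h | h
        · obtain ⟨u, hu⟩ := h
          exact ⟨u, hu.symm⟩
        · have : (x ++ w').length ≤ x.length := h.length_le
          simp at this
          exact ⟨[], by simp [this]⟩
      have hw'len : w'.length ≤ n := by
        have : w'.length = w.length - m := by simp [hw']
        omega
      obtain ⟨l', hl', hfl⟩ := ih w' hw'len hw'F hw'x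
      refine ⟨p :: l', ?_, ?_⟩
      · intro y hy
        rcases List.mem_cons.mp hy with h | h
        · subst h; exact hpret
        · exact hl' y h
      · simp [List.flatten, hfl, hpw]

theorem stmt_10 {A : Type*} [Fintype A] (F : Set (List A))
    (hfac : ∀ w ∈ F, ∀ u : List A, u <:+: w → u ∈ F)
    (x : List A) (hx : x ∈ F) :
    {w : List A | x ++ w ∈ F ∧ ∃ s : List A, x ++ w = s ++ x} =
      {w : List A | ∃ l : List (List A),
          (∀ y ∈ l, y ≠ [] ∧ (x ++ y ∈ F ∧ ∃ s : List A, x ++ y = s ++ x) ∧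
            ∀ p : List A, p <+: y → p ≠ [] → p ≠ y →
              ¬(x ++ p ∈ F ∧ ∃ s : List A, x ++ p = s ++ x)) ∧
          l.flatten = w}
      ∩ {w : List A | x ++ w ∈ F} := by
  ext w
  simp only [Set.mem_setOf_eq, Set.mem_inter_iff]
  constructor
  · rintro ⟨hF, hs⟩
    exact ⟨stmt_10_helper F hfac x w.length w le_rfl hF hs, hF⟩
  · rintro ⟨⟨l, hl, hfl⟩, hF⟩
    refine ⟨hF, ?_⟩
    subst hfl
    clear hF
    induction l with
    | nil => exact ⟨[], by simp⟩
    | cons y l ihl =>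
      obtain ⟨s, hy⟩ := (hl y (by simp)).2.1.2
      obtain ⟨s', hs'⟩ := ihl (fun z hz => hl z (List.mem_cons_of_mem _ hz))
      refine ⟨s ++ s', ?_⟩
      calc x ++ (y :: l).flatten = (x ++ y) ++ l.flatten := by
            simp [List.flatten]
        _ = (s ++ s') ++ x := by
            rw [hy, List.append_assoc, hs', ← List.append_assoc]
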